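/- Let f : ℝⁿ → ℝ be twice continuously differentiable with L-Lipschitz Hessian, let m > 0, and let H be a real symmetric n×n matrix with m·I ⪯ H and ∇²f(x) ⪯ H at a point x ∈ ℝⁿ. Set Δx = −H⁻¹∇f(x). Then f(x + Δx) ≤ f(x) + (1/2)⟨∇f(x), Δx⟩·(1 − (L/(3m²))‖∇f(x)‖). -/

import Mathlib

open scoped InnerProductSpace

section NCNHelpers

open Matrix

variable {n : ℕ}



lemma psd_inner_nonneg {A : Matrix (Fin n) (Fin n) ℝ} (hA : A.PosSemidef)
    (v : EuclideanSpace ℝ (Fin n)) : 0 ≤ ⟪v, Matrix.toEuclideanLin A v⟫_ℝ := by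
  rw [Matrix.toEuclideanLin_apply, EuclideanSpace.inner_eq_star_dotProduct]
  simpa [dotProduct_comm] using hA.dotProduct_mulVec_nonneg (WithLp.equiv 2 _ v)

lemma inner_toEuclideanLin_abs_le (A : Matrix (Fin n) (Fin n) ℝ)
    (v : EuclideanSpace ℝ (Fin n)) :
    |⟪v, Matrix.toEuclideanLin A v⟫_ℝ| ≤ ‖Matrix.toEuclideanCLM (𝕜 := ℝ) A‖ * ‖v‖ ^ 2 := by
  have h : Matrix.toEuclideanLin A v = Matrix.toEuclideanCLM (𝕜 := ℝ) A v := by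
    rw [← Matrix.coe_toEuclideanCLM_eq_toEuclideanLin]; rfl
  rw [h]
  calc |⟪v, Matrix.toEuclideanCLM (𝕜 := ℝ) A v⟫_ℝ| ≤ ‖v‖ * ‖Matrix.toEuclideanCLM (𝕜 := ℝ) A v‖ :=
        abs_real_inner_le_norm _ _
    _ ≤ ‖v‖ * (‖Matrix.toEuclideanCLM (𝕜 := ℝ) A‖ * ‖v‖) := by
        gcongr; exact (Matrix.toEuclideanCLM (𝕜 := ℝ) A).le_opNorm v
    _ = ‖Matrix.toEuclideanCLM (𝕜 := ℝ) A‖ * ‖v‖ ^ 2 := by ring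




lemma posdef_of_sub_smul_one {m : ℝ} (hm : 0 < m) {H : Matrix (Fin n) (Fin n) ℝ}
    (hH : H.IsHermitian) (hlow : (H - m • (1 : Matrix (Fin n) (Fin n) ℝ)).PosSemidef) :
    H.PosDef := by
  refine Matrix.PosDef.of_dotProduct_mulVec_pos hH (fun y hy => ?_)
  have h1 := hlow.dotProduct_mulVec_nonneg y
  have h2 : (H - m • (1 : Matrix (Fin n) (Fin n) ℝ)) *ᵥ y = H *ᵥ y - m • y := by
    rw [Matrix.sub_mulVec, Matrix.smul_mulVec, Matrix.one_mulVec]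
  rw [h2, dotProduct_sub, dotProduct_smul, sub_nonneg] at h1
  have h3 : 0 < dotProduct (star y) y := dotProduct_star_self_pos_iff.mpr hy
  have : (0:ℝ) < m • dotProduct (star y) y := by
    simpa [smul_eq_mul] using mul_pos hm h3
  linarith [h1, this]

example {H : Matrix (Fin n) (Fin n) ℝ} (hpd : H.PosDef) (g : EuclideanSpace ℝ (Fin n)) :
    Matrix.toEuclideanLin H (Matrix.toEuclideanLin H⁻¹ g) = g := by
  have hdet : IsUnit H.det := isUnit_iff_ne_zero.mpr hpd.det_pos.ne'
  have : H * H⁻¹ = 1 := Matrix.mul_nonsing_inv H hdet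
  rw [Matrix.toEuclideanLin_apply, Matrix.toEuclideanLin_apply]
  simp [Matrix.mulVec_mulVec, this]


lemma fderiv_eq_inner_gradient (f : EuclideanSpace ℝ (Fin n) → ℝ) (x v : EuclideanSpace ℝ (Fin n)) :
    fderiv ℝ f x v = ⟪gradient f x, v⟫_ℝ := by
  rw [gradient, InnerProductSpace.toDual_symm_apply]

lemma line_hasDerivAt (x d : EuclideanSpace ℝ (Fin n)) (t : ℝ) :
    HasDerivAt (fun t : ℝ => x + t • d) d t := by
  simpa using ((hasDerivAt_id t).smul_const d).const_add x

lemma phi_hasDerivAt {f : EuclideanSpace ℝ (Fin n) → ℝ} (hf : ContDiff ℝ 2 f)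
    (x d : EuclideanSpace ℝ (Fin n)) (t : ℝ) :
    HasDerivAt (fun t : ℝ => f (x + t • d)) (fderiv ℝ f (x + t • d) d) t := by
  have h1 : HasFDerivAt f (fderiv ℝ f (x + t • d)) (x + t • d) :=
    (hf.differentiable two_ne_zero _).hasFDerivAt
  exact h1.comp_hasDerivAt t (line_hasDerivAt x d t)

lemma phi'_hasDerivAt {f : EuclideanSpace ℝ (Fin n) → ℝ} (hf : ContDiff ℝ 2 f)
    (Hess : EuclideanSpace ℝ (Fin n) → Matrix (Fin n) (Fin n) ℝ)
    (hHessf : ∀ y u v, iteratedFDeriv ℝ 2 f y ![u, v] = ⟪u, Matrix.toEuclideanLin (Hess y) v⟫_ℝ)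
    (x d : EuclideanSpace ℝ (Fin n)) (t : ℝ) :
    HasDerivAt (fun t : ℝ => fderiv ℝ f (x + t • d) d)
      (⟪d, Matrix.toEuclideanLin (Hess (x + t • d)) d⟫_ℝ) t := by
  have hf1 : Differentiable ℝ (fderiv ℝ f) :=
    (hf.fderiv_right (le_refl 2)).differentiable one_ne_zero
  have h1 : HasFDerivAt (fderiv ℝ f) (fderiv ℝ (fderiv ℝ f) (x + t • d)) (x + t • d) :=
    (hf1 _).hasFDerivAt
  have h2 : HasDerivAt (fun t : ℝ => fderiv ℝ f (x + t • d))
      (fderiv ℝ (fderiv ℝ f) (x + t • d) d) t :=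
    h1.comp_hasDerivAt t (line_hasDerivAt x d t)
  have h3 : HasDerivAt (fun t : ℝ => fderiv ℝ f (x + t • d) d)
      (fderiv ℝ (fderiv ℝ f) (x + t • d) d d) t :=
    h2.clm_apply (hasDerivAt_const t d) |>.congr_deriv (by simp)
  have h4 : fderiv ℝ (fderiv ℝ f) (x + t • d) d d
      = ⟪d, Matrix.toEuclideanLin (Hess (x + t • d)) d⟫_ℝ := by
    rw [← hHessf (x + t • d) d d, iteratedFDeriv_two_apply]
    simp
  rwa [h4] at h3

lemma descent_taylor {f : EuclideanSpace ℝ (Fin n) → ℝ} (hf : ContDiff ℝ 2 f)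
    (Hess : EuclideanSpace ℝ (Fin n) → Matrix (Fin n) (Fin n) ℝ)
    (hHessf : ∀ y u v, iteratedFDeriv ℝ 2 f y ![u, v] = ⟪u, Matrix.toEuclideanLin (Hess y) v⟫_ℝ)
    (x d : EuclideanSpace ℝ (Fin n)) (c K : ℝ)
    (hbound : ∀ t ∈ Set.Icc (0:ℝ) 1,
      ⟪d, Matrix.toEuclideanLin (Hess (x + t • d)) d⟫_ℝ ≤ c + K * t) :
    f (x + d) ≤ f x + ⟪gradient f x, d⟫_ℝ + c / 2 + K / 6 := by
  set s := ⟪gradient f x, d⟫_ℝ with hs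
  set F : ℝ → ℝ := fun t => f x + s * t + c / 2 * t ^ 2 + K / 6 * t ^ 3 - f (x + t • d) with hF
  set F' : ℝ → ℝ := fun t => s + c * t + K / 2 * t ^ 2 - fderiv ℝ f (x + t • d) d with hF'def
  have hF' : ∀ t, HasDerivAt F (F' t) t := by
    intro t
    have hp : HasDerivAt (fun u : ℝ => f x + s * u + c / 2 * u ^ 2 + K / 6 * u ^ 3)
        (s + c * t + K / 2 * t ^ 2) t := by
      have h := (((hasDerivAt_const t (f x)).add ((hasDerivAt_id t).const_mul s)).add
        ((hasDerivAt_pow 2 t).const_mul (c / 2))).add ((hasDerivAt_pow 3 t).const_mul (K / 6))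
      exact h.congr_deriv (by push_cast; ring)
    exact hp.sub (phi_hasDerivAt hf x d t)
  have hF'' : ∀ t, HasDerivAt F'
      (c + K * t - ⟪d, Matrix.toEuclideanLin (Hess (x + t • d)) d⟫_ℝ) t := by
    intro t
    have hp : HasDerivAt (fun u : ℝ => s + c * u + K / 2 * u ^ 2) (c + K * t) t := by
      have h := ((hasDerivAt_const t s).add ((hasDerivAt_id t).const_mul c)).add
        ((hasDerivAt_pow 2 t).const_mul (K / 2))
      exact h.congr_deriv (by push_cast; ring)
    exact hp.sub (phi'_hasDerivAt hf Hess hHessf x d t)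
  have hF'0 : F' 0 = 0 := by
    simp only [hF'def]
    rw [show x + (0:ℝ) • d = x by simp, fderiv_eq_inner_gradient]
    simp [hs]
  have hmono' : MonotoneOn F' (Set.Icc 0 1) := by
    apply monotoneOn_of_hasDerivWithinAt_nonneg (convex_Icc 0 1)
      (fun t _ => (hF'' t).differentiableAt.continuousAt.continuousWithinAt)
      (fun t _ => (hF'' t).hasDerivWithinAt)
    intro t ht
    rw [interior_Icc] at ht
    have hb := hbound t (Set.mem_Icc.mpr ⟨le_of_lt ht.1, le_of_lt ht.2⟩)
    linarith
  have hF'nonneg : ∀ t ∈ Set.Icc (0:ℝ) 1, 0 ≤ F' t := by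
    intro t ht
    have := hmono' (Set.left_mem_Icc.mpr zero_le_one) ht ht.1
    rw [hF'0] at this
    exact this
  have hmono : MonotoneOn F (Set.Icc 0 1) := by
    apply monotoneOn_of_hasDerivWithinAt_nonneg (convex_Icc 0 1)
      (fun t _ => (hF' t).differentiableAt.continuousAt.continuousWithinAt)
      (fun t _ => (hF' t).hasDerivWithinAt)
    intro t ht
    rw [interior_Icc] at ht
    exact hF'nonneg t (Set.mem_Icc.mpr ⟨le_of_lt ht.1, le_of_lt ht.2⟩)
  have hkey := hmono (Set.left_mem_Icc.mpr zero_le_one) (Set.right_mem_Icc.mpr zero_le_one)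
    zero_le_one
  have hF0 : F 0 = 0 := by simp [hF]
  have hF1 : F 1 = f x + s + c / 2 + K / 6 - f (x + d) := by
    simp only [hF]
    rw [one_smul]
    ring
  rw [hF0, hF1] at hkey
  linarith


end NCNHelpers

set_option maxHeartbeats 2000000 in
/-- One-step decrement bound for the Nonconvex Newton step `Δx = -H⁻¹∇f(x)`, where `H` is a
symmetric matrix with `m·I ⪯ H` and `∇²f(x) ⪯ H`, and `f` is twice continuously
differentiable with `L`-Lipschitz Hessian:
`f(x + Δx) ≤ f(x) + (1/2)⟨∇f(x), Δx⟩(1 - (L/(3m²))‖∇f(x)‖)`.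
Here `Hess y` is the Hessian matrix of `f` at `y`, characterized by
`⟪u, Hess y v⟫ = D²f(y)[u, v]`. -/
theorem ncn_step_decrement {n : ℕ}
    (f : EuclideanSpace ℝ (Fin n) → ℝ) (L m : ℝ)
    (Hess : EuclideanSpace ℝ (Fin n) → Matrix (Fin n) (Fin n) ℝ)
    (hf : ContDiff ℝ 2 f)
    (hHessf : ∀ y u v, iteratedFDeriv ℝ 2 f y ![u, v] = ⟪u, Matrix.toEuclideanLin (Hess y) v⟫_ℝ)
    (hLip : ∀ x y, ‖Matrix.toEuclideanCLM (𝕜 := ℝ) (Hess x - Hess y)‖ ≤ L * ‖x - y‖)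
    (hm : 0 < m)
    (x : EuclideanSpace ℝ (Fin n))
    (H : Matrix (Fin n) (Fin n) ℝ) (hH : H.IsHermitian)
    (hlow : (H - m • (1 : Matrix (Fin n) (Fin n) ℝ)).PosSemidef)
    (hHx : (H - Hess x).PosSemidef) :
    f (x + -(Matrix.toEuclideanLin H⁻¹ (gradient f x))) ≤
      f x + (1/2) * ⟪gradient f x, -(Matrix.toEuclideanLin H⁻¹ (gradient f x))⟫_ℝ *
        (1 - L / (3 * m ^ 2) * ‖gradient f x‖) := by
  set g := gradient f x with hg
  set v := Matrix.toEuclideanLin H⁻¹ g with hv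
  set d := -v with hd
  -- basic matrix facts
  have hpd : H.PosDef := posdef_of_sub_smul_one hm hH hlow
  have hdet : IsUnit H.det := isUnit_iff_ne_zero.mpr hpd.det_pos.ne'
  have hHinv : H * H⁻¹ = 1 := Matrix.mul_nonsing_inv H hdet
  have hHv : Matrix.toEuclideanLin H v = g := by
    rw [hv, Matrix.toEuclideanLin_apply, Matrix.toEuclideanLin_apply]
    simp [Matrix.mulVec_mulVec, hHinv]
  set c := ⟪g, v⟫_ℝ with hc
  -- H ⪰ m I gives m‖v‖² ≤ c
  have hone : Matrix.toEuclideanLin (1 : Matrix (Fin n) (Fin n) ℝ) v = v := by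
    rw [Matrix.toEuclideanLin_apply]; simp
  have hmv2 : m * ‖v‖ ^ 2 ≤ c := by
    have h0 := psd_inner_nonneg hlow v
    rw [map_sub, map_smul, LinearMap.sub_apply, LinearMap.smul_apply, hone, hHv, inner_sub_right,
      real_inner_smul_right, real_inner_self_eq_norm_sq] at h0
    have hvg : ⟪v, g⟫_ℝ = c := by rw [hc, real_inner_comm]
    linarith [h0, hvg.ge, hvg.le]
  have hcnn : 0 ≤ c := le_trans (by positivity) hmv2
  -- inner products with d = -v
  have hdHd : ⟪d, Matrix.toEuclideanLin H d⟫_ℝ = c := by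
    rw [hd, map_neg, inner_neg_neg, hHv, real_inner_comm]
  have hgd : ⟪g, d⟫_ℝ = -c := by rw [hd, inner_neg_right]
  have hnd : ‖d‖ = ‖v‖ := norm_neg v
  -- Hessian bound along the segment
  have hbound : ∀ t ∈ Set.Icc (0:ℝ) 1,
      ⟪d, Matrix.toEuclideanLin (Hess (x + t • d)) d⟫_ℝ ≤ c + (L * ‖d‖ ^ 3) * t := by
    intro t ht
    have ht0 : 0 ≤ t := ht.1
    have h1 : ⟪d, Matrix.toEuclideanLin (Hess x) d⟫_ℝ ≤ c := by
      have h0 := psd_inner_nonneg hHx d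
      rw [map_sub, LinearMap.sub_apply, inner_sub_right] at h0
      linarith [h0, hdHd.ge]
    have h2 : ⟪d, Matrix.toEuclideanLin (Hess (x + t • d) - Hess x) d⟫_ℝ
        ≤ L * (t * ‖d‖) * ‖d‖ ^ 2 := by
      refine le_trans (le_abs_self _) (le_trans (inner_toEuclideanLin_abs_le _ d) ?_)
      have hnorm : ‖x + t • d - x‖ = t * ‖d‖ := by
        rw [add_sub_cancel_left, norm_smul]
        simp [abs_of_nonneg ht0]
      have := hLip (x + t • d) x
      rw [hnorm] at this
      have hd2 : (0:ℝ) ≤ ‖d‖ ^ 2 := by positivity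
      nlinarith [this, hd2]
    have hsplit : ⟪d, Matrix.toEuclideanLin (Hess (x + t • d)) d⟫_ℝ
        = ⟪d, Matrix.toEuclideanLin (Hess x) d⟫_ℝ
          + ⟪d, Matrix.toEuclideanLin (Hess (x + t • d) - Hess x) d⟫_ℝ := by
      rw [map_sub, LinearMap.sub_apply, inner_sub_right]; ring
    rw [hsplit]
    nlinarith [h1, h2]
  -- Taylor upper bound
  have htaylor := descent_taylor hf Hess hHessf x d c (L * ‖d‖ ^ 3) hbound
  rw [← hg, hgd] at htaylor
  -- the cubic term bound
  have hterm : m ^ 2 * (L * ‖d‖ ^ 3) ≤ L * (c * ‖g‖) := by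
    by_cases hv0 : v = 0
    · have hd0 : d = 0 := by rw [hd, hv0, neg_zero]
      have hc0 : c = 0 := by rw [hc, hv0, inner_zero_right]
      simp [hd0, hc0]
    · have hvpos : 0 < ‖v‖ := norm_pos_iff.mpr hv0
      have hL : 0 ≤ L := by
        have h0 := hLip x (x + d)
        have : ‖x - (x + d)‖ = ‖d‖ := by
          rw [show x - (x + d) = -d by abel, norm_neg]
        rw [this, hnd] at h0
        have h1 : (0:ℝ) ≤ L * ‖v‖ := le_trans (norm_nonneg _) h0
        nlinarith [h1, hvpos]
      have hgle : c ≤ ‖g‖ * ‖v‖ := by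
        rw [hc]; exact real_inner_le_norm g v
      have hmvg : m * ‖v‖ ≤ ‖g‖ := by
        have h := hmv2.trans hgle
        have : m * ‖v‖ * ‖v‖ ≤ ‖g‖ * ‖v‖ := by nlinarith [h]
        exact le_of_mul_le_mul_right this hvpos
      have hcube : m ^ 2 * ‖v‖ ^ 3 ≤ c * ‖g‖ := by
        have hmul := mul_le_mul hmv2 hmvg (by positivity) hcnn
        nlinarith [hmul]
      rw [hnd]
      nlinarith [hcube, hL]
  have hm2 : (0:ℝ) < m ^ 2 := by positivity
  have hkey : L * ‖d‖ ^ 3 / 6 ≤ c * (L * ‖g‖) / (6 * m ^ 2) := by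
    rw [div_le_div_iff₀ (by norm_num) (by positivity)]
    nlinarith [hterm, hm2]
  have hrhs : f x + 1/2 * (-c) * (1 - L / (3 * m ^ 2) * ‖g‖)
      = f x + -c + c / 2 + c * (L * ‖g‖) / (6 * m ^ 2) := by
    field_simp
    ring
  rw [hgd, hrhs]
  linarith [htaylor, hkey]
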